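/- Forced large drift (Proposition 1 of the paper): let P_0, ..., P_M (M ≥ 1) be probability distributions on a finite set X with each P_{t+1} positive on the support of P_t, let a ≠ b ∈ X, and suppose P_M(b) ≥ P_M(a) + β with β ≥ 0 and P_0(a) ≥ P_0(b) + (γ - 2δ). Set Δ = (1/2)·max(β + γ - 2δ, 0). Then TV(P_M, P_0) ≥ Δ and (1/M)·Σ_{t=0}^{M-1} KL(P_t‖P_{t+1}) ≥ 2·Δ²/M². -/

import Mathlib

open Real Finset


lemma log_sum_ineq {X : Type*} (s : Finset X) (a b : X → ℝ)
    (ha : ∀ x ∈ s, 0 ≤ a x) (hb : ∀ x ∈ s, 0 ≤ b x)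
    (hab : ∀ x ∈ s, b x = 0 → a x = 0) :
    (∑ x ∈ s, a x) * Real.log ((∑ x ∈ s, a x) / (∑ x ∈ s, b x)) ≤
      ∑ x ∈ s, a x * Real.log (a x / b x) := by
  rcases eq_or_lt_of_le (Finset.sum_nonneg hb) with hB | hB
  · -- all b zero hence all a zero
    have hb0 : ∀ x ∈ s, b x = 0 := by
      intro x hx
      exact (Finset.sum_eq_zero_iff_of_nonneg hb).1 hB.symm x hx
    have ha0 : ∀ x ∈ s, a x = 0 := fun x hx => hab x hx (hb0 x hx)
    have h2 : ∀ x ∈ s, a x * Real.log (a x / b x) = 0 := by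
      intro x hx; rw [ha0 x hx]; simp
    rw [Finset.sum_eq_zero ha0, Finset.sum_eq_zero h2]
    simp
  · have key := Real.convexOn_mul_log.map_centerMass_le (t := s) (w := b)
      (p := fun x => a x / b x) hb hB
      (fun x hx => Set.mem_Ici.2 (div_nonneg (ha x hx) (hb x hx)))
    have hws : ∑ x ∈ s, b x • (a x / b x) = ∑ x ∈ s, a x := by
      apply Finset.sum_congr rfl
      intro x hx
      rcases eq_or_lt_of_le (hb x hx) with h0 | h0
      · rw [← h0, hab x hx h0.symm]; simp
      · rw [smul_eq_mul]; field_simp [h0.ne']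
    have hcm : s.centerMass b (fun x => a x / b x) = (∑ x ∈ s, a x) / (∑ x ∈ s, b x) := by
      rw [Finset.centerMass, hws, smul_eq_mul, inv_mul_eq_div]
    rw [hcm] at key
    have hrhs : s.centerMass b ((fun x => x * Real.log x) ∘ fun x => a x / b x)
        = (∑ x ∈ s, b x)⁻¹ * ∑ x ∈ s, a x * Real.log (a x / b x) := by
      rw [Finset.centerMass, smul_eq_mul]
      congr 1
      apply Finset.sum_congr rfl
      intro x hx
      simp only [Function.comp, smul_eq_mul]
      rcases eq_or_lt_of_le (hb x hx) with h0 | h0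
      · rw [← h0, hab x hx h0.symm]; simp
      · field_simp
    rw [hrhs] at key
    have := mul_le_mul_of_nonneg_left key (le_of_lt hB)
    calc (∑ x ∈ s, a x) * Real.log ((∑ x ∈ s, a x) / (∑ x ∈ s, b x))
        = (∑ x ∈ s, b x) * ((∑ x ∈ s, a x) / (∑ x ∈ s, b x) *
            Real.log ((∑ x ∈ s, a x) / (∑ x ∈ s, b x))) := by
          field_simp
      _ ≤ (∑ x ∈ s, b x) * ((∑ x ∈ s, b x)⁻¹ * ∑ x ∈ s, a x * Real.log (a x / b x)) := this
      _ = ∑ x ∈ s, a x * Real.log (a x / b x) := by field_simp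


-- derivative helper: F x = -p * log x - c * log (1-x) - 2*(p-x)^2 on (0,1)
lemma hasDerivF (p c x : ℝ) (hx0 : x ≠ 0) (hx1 : x ≠ 1) :
    HasDerivAt (fun y => -p * Real.log y - c * Real.log (1 - y) - 2 * (p - y) ^ 2)
      (-p / x + c / (1 - x) + 4 * (p - x)) x := by
  have h1 : HasDerivAt (fun y => -p * Real.log y) (-p * x⁻¹) x :=
    (Real.hasDerivAt_log hx0).const_mul (-p)
  have hsub : HasDerivAt (fun y : ℝ => 1 - y) (-1) x := by
    simpa using (hasDerivAt_id x).const_sub 1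
  have h2 : HasDerivAt (fun y => Real.log (1 - y)) ((1 - x)⁻¹ * -1) x :=
    (Real.hasDerivAt_log (by intro h; apply hx1; linarith [sub_eq_zero.mp h])).comp x hsub
  have h2' : HasDerivAt (fun y => c * Real.log (1 - y)) (c * ((1 - x)⁻¹ * -1)) x :=
    h2.const_mul c
  have h3 : HasDerivAt (fun y : ℝ => 2 * (p - y) ^ 2) (2 * (2 * (p - x) * -1)) x := by
    have : HasDerivAt (fun y : ℝ => (p - y) ^ 2) (2 * (p - x) ^ 1 * -1) x :=
      (((hasDerivAt_id x).const_sub p)).pow 2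
    simpa using this.const_mul 2
  have := (h1.sub h2').sub h3
  refine this.congr_deriv ?_
  ring

lemma two_point (p q : ℝ) (hq0 : 0 ≤ q) (hqp : q ≤ p) (hp1 : p ≤ 1) (h0 : q = 0 → p = 0) :
    2 * (p - q) ^ 2 ≤ p * Real.log (p / q) + (1 - p) * Real.log ((1 - p) / (1 - q)) := by
  rcases eq_or_lt_of_le hqp with heq | hlt
  · subst heq
    have h1 : q * Real.log (q / q) = 0 := by
      rcases eq_or_ne q 0 with rfl | hp; · simp
      · rw [div_self hp]; simp
    have h2 : (1 - q) * Real.log ((1 - q) / (1 - q)) = 0 := by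
      rcases eq_or_ne (1 - q) 0 with h | h; · rw [h]; simp
      · rw [div_self h]; simp
    rw [h1, h2]; simp
  · have hq : 0 < q := by
      rcases eq_or_lt_of_le hq0 with rfl | h; · exact absurd (h0 rfl) (by linarith)
      · exact h
    set F := fun y => -p * Real.log y - (1 - p) * Real.log (1 - y) - 2 * (p - y) ^ 2 with hF
    rcases eq_or_lt_of_le hp1 with rfl | hp1'
    · -- p = 1 case
      set G := fun y => -Real.log y - 2 * (1 - y) ^ 2 with hG
      have hanti : AntitoneOn G (Set.Icc q 1) := by
        apply antitoneOn_of_deriv_nonpos (convex_Icc q 1)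
        · apply ContinuousOn.sub (ContinuousOn.neg _) (continuousOn_const.mul _)
          · exact Real.continuousOn_log.mono (by intro y hy; simp; intro h; simp at hy; nlinarith [hy.1])
          · fun_prop
        · intro y hy
          rw [interior_Icc] at hy
          have : HasDerivAt G (-y⁻¹ - 2 * (2 * (1 - y) ^ 1 * -1)) y := by
            have ha : HasDerivAt (fun z : ℝ => -Real.log z) (-y⁻¹) y := by
              exact (Real.hasDerivAt_log (by nlinarith [hy.1] : y ≠ 0)).neg
            have hb : HasDerivAt (fun z : ℝ => 2 * (1 - z) ^ 2) (2 * (2 * (1 - y) ^ 1 * -1)) y := by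
              simpa using (((hasDerivAt_id y).const_sub 1)).pow 2 |>.const_mul 2
            exact ha.sub hb
          exact this.differentiableAt.differentiableWithinAt
        · intro y hy
          rw [interior_Icc] at hy
          obtain ⟨hy1, hy2⟩ := hy
          have hy0 : 0 < y := lt_trans hq hy1
          have : HasDerivAt G (-y⁻¹ - 2 * (2 * (1 - y) ^ 1 * -1)) y := by
            have ha : HasDerivAt (fun z : ℝ => -Real.log z) (-y⁻¹) y := by
              exact (Real.hasDerivAt_log hy0.ne').neg
            have hb : HasDerivAt (fun z : ℝ => 2 * (1 - z) ^ 2) (2 * (2 * (1 - y) ^ 1 * -1)) y := by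
              simpa using (((hasDerivAt_id y).const_sub 1)).pow 2 |>.const_mul 2
            exact ha.sub hb
          rw [this.deriv]
          have : -y⁻¹ - 2 * (2 * (1 - y) ^ 1 * -1) = -((1 - 2*y)^2 / y) := by
            field_simp; ring
          rw [this]
          exact neg_nonpos.mpr (div_nonneg (sq_nonneg _) hy0.le)
      have hGq := hanti (Set.mem_Icc.2 ⟨le_refl q, by linarith⟩) (Set.mem_Icc.2 ⟨by linarith, le_refl 1⟩) hlt.le
      -- G 1 = -2*... = 0? G 1 = -log 1 - 2*0 = 0 ; G q ≥ G 1 means -log q - 2(1-q)^2 ≥ 0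
      have hG1 : G 1 = 0 := by simp [hG]
      have hGq' : 0 ≤ -Real.log q - 2 * (1 - q) ^ 2 := by
        have := hGq; rw [hG1] at this; simpa [hG] using this
      have : Real.log (1 / q) = -Real.log q := by rw [one_div, Real.log_inv]
      simp only [sub_self, one_mul, zero_mul, add_zero, this]
      nlinarith [hGq']
    · -- p < 1 case
      have hanti : AntitoneOn F (Set.Icc q p) := by
        apply antitoneOn_of_deriv_nonpos (convex_Icc q p)
        · apply ContinuousOn.sub (ContinuousOn.sub _ _) (by fun_prop)
          · apply ContinuousOn.mul continuousOn_const
            exact Real.continuousOn_log.mono (by intro y hy; simp; intro h; simp at hy; nlinarith [hy.1])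
          · apply ContinuousOn.mul continuousOn_const
            apply Real.continuousOn_log.comp (by fun_prop)
            intro y hy; simp at hy ⊢; intro h; nlinarith [hy.2, sub_eq_zero.mp h]
        · intro y hy
          rw [interior_Icc] at hy
          have hy0 : 0 < y := lt_trans hq hy.1
          have hy1 : y < 1 := lt_of_lt_of_le hy.2 (by linarith)
          exact (hasDerivF p (1 - p) y hy0.ne' hy1.ne).differentiableAt.differentiableWithinAt
        · intro y hy
          rw [interior_Icc] at hy
          obtain ⟨hy1, hy2⟩ := hy
          have hy0 : 0 < y := lt_trans hq hy1
          have hyl1 : y < 1 := lt_of_lt_of_le hy2 (by linarith)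
          rw [(hasDerivF p (1 - p) y hy0.ne' hyl1.ne).deriv]
          have hkey : -p / y + (1 - p) / (1 - y) + 4 * (p - y)
              = ((y - p) * (1 - 4 * (y * (1 - y)))) / (y * (1 - y)) := by
            have h1y : (1:ℝ) - y ≠ 0 := by linarith
            field_simp
            ring
          rw [hkey]
          apply div_nonpos_of_nonpos_of_nonneg
          · nlinarith [sq_nonneg (1 - 2*y)]
          · nlinarith
      have hFq := hanti (Set.mem_Icc.2 ⟨le_refl q, hqp⟩) (Set.mem_Icc.2 ⟨hqp, le_refl p⟩) hqp
      have hp0 : 0 < p := lt_of_le_of_lt hq0 hlt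
      have h1q : 0 < 1 - q := by linarith
      have h1p : 0 < 1 - p := by linarith
      rw [Real.log_div hp0.ne' hq.ne', Real.log_div h1p.ne' h1q.ne']
      simp only [hF] at hFq
      nlinarith [hFq]

lemma pinsker {X : Type*} [Fintype X] (P Q : X → ℝ) (hP : ∀ x, 0 ≤ P x) (hQ : ∀ x, 0 ≤ Q x)
    (hPs : ∑ x, P x = 1) (hQs : ∑ x, Q x = 1) (habs : ∀ x, Q x = 0 → P x = 0) :
    2 * ((1 / 2) * ∑ x, |P x - Q x|) ^ 2 ≤ ∑ x, P x * Real.log (P x / Q x) := by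
  classical
  set A : Finset X := Finset.univ.filter (fun x => Q x ≤ P x) with hA
  set p := ∑ x ∈ A, P x with hp
  set q := ∑ x ∈ A, Q x with hq
  have hAc : ∀ x ∈ Finset.univ.filter (fun x => ¬ Q x ≤ P x), P x ≤ Q x := by
    intro x hx; simp at hx; linarith
  have hsplitP : p + ∑ x ∈ Finset.univ.filter (fun x => ¬ Q x ≤ P x), P x = 1 := by
    rw [hp, Finset.sum_filter_add_sum_filter_not, hPs]
  have hsplitQ : q + ∑ x ∈ Finset.univ.filter (fun x => ¬ Q x ≤ P x), Q x = 1 := by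
    rw [hq, Finset.sum_filter_add_sum_filter_not, hQs]
  have hqp : q ≤ p := Finset.sum_le_sum (fun x hx => by simp [hA] at hx; exact hx)
  have hq0 : 0 ≤ q := Finset.sum_nonneg (fun x _ => hQ x)
  have hp1 : p ≤ 1 := by
    have : 0 ≤ ∑ x ∈ Finset.univ.filter (fun x => ¬ Q x ≤ P x), P x :=
      Finset.sum_nonneg (fun x _ => hP x)
    linarith
  have h0 : q = 0 → p = 0 := by
    intro h
    have hq0' : ∀ x ∈ A, Q x = 0 :=
      (Finset.sum_eq_zero_iff_of_nonneg (fun x _ => hQ x)).1 h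
    exact Finset.sum_eq_zero (fun x hx => habs x (hq0' x hx))
  -- TV identity
  have hTV : ∑ x, |P x - Q x| = 2 * (p - q) := by
    rw [← Finset.sum_filter_add_sum_filter_not Finset.univ (fun x => Q x ≤ P x)
      (fun x => |P x - Q x|)]
    have e1 : ∑ x ∈ A, |P x - Q x| = p - q := by
      rw [hp, hq, ← Finset.sum_sub_distrib]
      apply Finset.sum_congr rfl
      intro x hx; simp [hA] at hx; rw [abs_of_nonneg]; linarith
    have e2 : ∑ x ∈ Finset.univ.filter (fun x => ¬ Q x ≤ P x), |P x - Q x|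
        = (1 - q) - (1 - p) := by
      have : ∑ x ∈ Finset.univ.filter (fun x => ¬ Q x ≤ P x), |P x - Q x|
          = ∑ x ∈ Finset.univ.filter (fun x => ¬ Q x ≤ P x), (Q x - P x) := by
        apply Finset.sum_congr rfl
        intro x hx
        have := hAc x hx
        rw [abs_of_nonpos]; ring; linarith
      rw [this, Finset.sum_sub_distrib]
      have h1 : ∑ x ∈ Finset.univ.filter (fun x => ¬ Q x ≤ P x), Q x = 1 - q := by linarith
      have h2 : ∑ x ∈ Finset.univ.filter (fun x => ¬ Q x ≤ P x), P x = 1 - p := by linarith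
      rw [h1, h2]
    rw [e1, e2]; ring
  -- KL lower bound via log-sum on both parts
  have hKL : p * Real.log (p / q) + (1 - p) * Real.log ((1 - p) / (1 - q))
      ≤ ∑ x, P x * Real.log (P x / Q x) := by
    rw [← Finset.sum_filter_add_sum_filter_not Finset.univ (fun x => Q x ≤ P x)
      (fun x => P x * Real.log (P x / Q x))]
    have l1 := log_sum_ineq A P Q (fun x _ => hP x) (fun x _ => hQ x) (fun x _ => habs x)
    have l2 := log_sum_ineq (Finset.univ.filter (fun x => ¬ Q x ≤ P x)) P Q
      (fun x _ => hP x) (fun x _ => hQ x) (fun x _ => habs x)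
    have e1 : ∑ x ∈ Finset.univ.filter (fun x => ¬ Q x ≤ P x), P x = 1 - p := by linarith
    have e2 : ∑ x ∈ Finset.univ.filter (fun x => ¬ Q x ≤ P x), Q x = 1 - q := by linarith
    rw [e1, e2] at l2
    have l1' : p * Real.log (p / q) ≤ ∑ x ∈ A, P x * Real.log (P x / Q x) := by
      rw [hp, hq]; exact l1
    linarith
  have h2p := two_point p q hq0 hqp hp1 h0
  rw [hTV]
  calc 2 * (1 / 2 * (2 * (p - q))) ^ 2 = 2 * (p - q) ^ 2 := by ring
    _ ≤ _ := le_trans h2p hKL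

/-- Forced large drift (Proposition 1): if `P_M b ≥ P_M a + β` with `β ≥ 0`,
`P_0 a ≥ P_0 b + (γ - 2δ)`, `a ≠ b`, each `P_{t+1}` positive on the support of
`P_t`, and `Δ = (1/2)·max (β + γ - 2δ) 0`, then `TV(P_M, P_0) ≥ Δ` and
`(1/M)·Σ_{t<M} KL(P_t‖P_{t+1}) ≥ 2·Δ²/M²`. -/
theorem forced_large_drift {X : Type*} [Fintype X] (M : ℕ) (hM : 1 ≤ M)
    (P : ℕ → X → ℝ)
    (hP : ∀ t ≤ M, ∀ x, 0 ≤ P t x) (hPsum : ∀ t ≤ M, ∑ x, P t x = 1)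
    (habs : ∀ t < M, ∀ x, 0 < P t x → 0 < P (t + 1) x)
    (a b : X) (hab : a ≠ b) (β γ δ : ℝ) (hβ : 0 ≤ β)
    (h1 : P M a + β ≤ P M b) (h2 : P 0 b + (γ - 2 * δ) ≤ P 0 a) :
    (1 / 2) * max (β + γ - 2 * δ) 0 ≤ (1 / 2) * ∑ x, |P M x - P 0 x| ∧
    2 * ((1 / 2) * max (β + γ - 2 * δ) 0) ^ 2 / (M : ℝ) ^ 2 ≤
      (1 / (M : ℝ)) * ∑ t ∈ Finset.range M,
        ∑ x, P t x * Real.log (P t x / P (t + 1) x) := by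
  classical
  set Δ := (1 / 2) * max (β + γ - 2 * δ) 0 with hΔ
  have hMpos : (0:ℝ) < M := by exact_mod_cast hM
  -- Part 1: TV lower bound
  have hTVlb : Δ ≤ (1 / 2) * ∑ x, |P M x - P 0 x| := by
    have hsum_nonneg : (0:ℝ) ≤ ∑ x, |P M x - P 0 x| :=
      Finset.sum_nonneg (fun x _ => abs_nonneg _)
    have hsub : ({a, b} : Finset X) ⊆ Finset.univ := Finset.subset_univ _
    have hpair : ∑ x ∈ ({a, b} : Finset X), |P M x - P 0 x|
        = |P M a - P 0 a| + |P M b - P 0 b| := Finset.sum_pair hab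
    have hge : |P M a - P 0 a| + |P M b - P 0 b| ≤ ∑ x, |P M x - P 0 x| := by
      rw [← hpair]
      exact Finset.sum_le_sum_of_subset_of_nonneg hsub (fun x _ _ => abs_nonneg _)
    have ha' : P 0 a - P M a ≤ |P M a - P 0 a| := by
      rw [abs_sub_comm]; exact le_abs_self _
    have hb' : P M b - P 0 b ≤ |P M b - P 0 b| := le_abs_self _
    have hmax : max (β + γ - 2 * δ) 0 ≤ ∑ x, |P M x - P 0 x| := by
      apply max_le _ hsum_nonneg
      linarith
    rw [hΔ]
    linarith
  refine ⟨hTVlb, ?_⟩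
  -- Part 2
  set T : ℕ → ℝ := fun t => (1 / 2) * ∑ x, |P (t + 1) x - P t x| with hT
  -- triangle / telescoping
  have htel : ∑ x, |P M x - P 0 x| ≤ ∑ t ∈ Finset.range M, ∑ x, |P (t + 1) x - P t x| := by
    rw [Finset.sum_comm]
    apply Finset.sum_le_sum
    intro x _
    have : P M x - P 0 x = ∑ t ∈ Finset.range M, (P (t + 1) x - P t x) :=
      (Finset.sum_range_sub (fun t => P t x) M).symm
    rw [this]
    exact Finset.abs_sum_le_sum_abs _ _
  have hTsum : Δ ≤ ∑ t ∈ Finset.range M, T t := by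
    have : ∑ t ∈ Finset.range M, T t
        = (1 / 2) * ∑ t ∈ Finset.range M, ∑ x, |P (t + 1) x - P t x| := by
      rw [Finset.mul_sum]
    rw [this]
    calc Δ ≤ (1 / 2) * ∑ x, |P M x - P 0 x| := hTVlb
      _ ≤ _ := by linarith
  -- Pinsker per step
  have hstep : ∀ t ∈ Finset.range M, 2 * (T t) ^ 2 ≤
      ∑ x, P t x * Real.log (P t x / P (t + 1) x) := by
    intro t ht
    rw [Finset.mem_range] at ht
    have hTt : T t = (1 / 2) * ∑ x, |P t x - P (t + 1) x| := by
      simp only [hT]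
      congr 1
      exact Finset.sum_congr rfl fun x _ => abs_sub_comm _ _
    rw [hTt]
    apply pinsker (P t) (P (t + 1)) (hP t (le_of_lt ht)) (hP (t + 1) ht)
      (hPsum t (le_of_lt ht)) (hPsum (t + 1) ht)
    intro x hx
    by_contra h
    have hPt : 0 < P t x := lt_of_le_of_ne (hP t (le_of_lt ht) x) (Ne.symm h)
    have := habs t ht x hPt
    rw [hx] at this
    exact lt_irrefl 0 this
  -- Cauchy-Schwarz
  have hCS : (∑ t ∈ Finset.range M, T t) ^ 2 ≤ M * ∑ t ∈ Finset.range M, (T t) ^ 2 := by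
    have := sq_sum_le_card_mul_sum_sq (s := Finset.range M) (f := T)
    simpa using this
  have hΔ0 : 0 ≤ Δ := by positivity
  have hΔ2 : Δ ^ 2 ≤ M * ∑ t ∈ Finset.range M, (T t) ^ 2 := by
    calc Δ ^ 2 ≤ (∑ t ∈ Finset.range M, T t) ^ 2 := by
          apply pow_le_pow_left₀ hΔ0 hTsum
      _ ≤ _ := hCS
  have hKLsum : 2 * Δ ^ 2 / M ≤ ∑ t ∈ Finset.range M,
      ∑ x, P t x * Real.log (P t x / P (t + 1) x) := by
    have h1' : ∑ t ∈ Finset.range M, 2 * (T t) ^ 2 ≤ ∑ t ∈ Finset.range M,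
        ∑ x, P t x * Real.log (P t x / P (t + 1) x) := Finset.sum_le_sum hstep
    have h2' : 2 * Δ ^ 2 / M ≤ ∑ t ∈ Finset.range M, 2 * (T t) ^ 2 := by
      rw [div_le_iff₀ hMpos]
      rw [← Finset.mul_sum]
      nlinarith [hΔ2]
    linarith
  rw [div_le_iff₀ (by positivity : (0:ℝ) < (M:ℝ) ^ 2)]
  have : 1 / (M:ℝ) * (∑ t ∈ Finset.range M,
      ∑ x, P t x * Real.log (P t x / P (t + 1) x)) * (M:ℝ) ^ 2
      = (∑ t ∈ Finset.range M, ∑ x, P t x * Real.log (P t x / P (t + 1) x)) * M := by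
    field_simp
  rw [this]
  calc 2 * Δ ^ 2 = (2 * Δ ^ 2 / M) * M := by field_simp
    _ ≤ _ := by
      apply mul_le_mul_of_nonneg_right hKLsum hMpos.le
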